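/- There exists an absolute constant c > 0 such that for all positive integers k and s, ∑_{p prime, p > k} (ln p)^s / p² ≤ c · s! · (ln(k+2))^{s−1} / k. -/

import Mathlib

open Finset Real

lemma aux_pow_le_factorial_mul_exp (x : ℝ) (hx : 0 ≤ x) (m : ℕ) :
    x ^ m ≤ (Nat.factorial m : ℝ) * Real.exp x := by
  have h := Real.sum_le_exp_of_nonneg hx (m + 1)
  have h1 : x ^ m / (Nat.factorial m : ℝ) ≤ Real.exp x := by
    refine le_trans ?_ h
    exact Finset.single_le_sum (f := fun i => x ^ i / (Nat.factorial i : ℝ))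
      (fun i _ => by positivity) (Finset.self_mem_range_succ m)
  have hm : (0:ℝ) < (Nat.factorial m : ℝ) := by positivity
  calc x ^ m = x ^ m / (Nat.factorial m : ℝ) * (Nat.factorial m : ℝ) := by field_simp
    _ ≤ Real.exp x * (Nat.factorial m : ℝ) := by
        exact mul_le_mul_of_nonneg_right h1 hm.le
    _ = (Nat.factorial m : ℝ) * Real.exp x := by ring

lemma aux_pow_le_pow_mul_exp (y : ℝ) (hy : 0 ≤ y) (m : ℕ) :
    y ^ m ≤ (m : ℝ) ^ m * Real.exp (y - m) := by
  rcases Nat.eq_zero_or_pos m with rfl | hm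
  · simpa using Real.one_le_exp (by simpa using hy)
  · have hmR : (0:ℝ) < (m:ℝ) := by exact_mod_cast hm
    have h1 : y / m ≤ Real.exp (y / m - 1) := by
      have := Real.add_one_le_exp (y / m - 1)
      linarith
    have h2 : (y / m) ^ m ≤ Real.exp (y / m - 1) ^ m :=
      pow_le_pow_left₀ (by positivity) h1 m
    have h3 : Real.exp (y / m - 1) ^ m = Real.exp (y - m) := by
      rw [← Real.exp_nat_mul]
      congr 1
      field_simp
    calc y ^ m = (y / m) ^ m * (m:ℝ) ^ m := by
          rw [div_pow]; field_simp
      _ ≤ Real.exp (y - m) * (m:ℝ) ^ m := by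
          rw [← h3]; exact mul_le_mul_of_nonneg_right h2 (by positivity)
      _ = (m : ℝ) ^ m * Real.exp (y - m) := by ring

lemma aux_div_exp_pow_le_factorial (m : ℕ) :
    ((m : ℝ) / Real.exp 1) ^ m ≤ (Nat.factorial m : ℝ) := by
  have h := aux_pow_le_factorial_mul_exp (m : ℝ) (by positivity) m
  have he : Real.exp (m : ℝ) = Real.exp 1 ^ m := by
    rw [← Real.exp_nat_mul]; ring_nf
  rw [div_pow]
  rw [div_le_iff₀ (by positivity)]
  rw [he] at h
  linarith

lemma aux_gmax_bound (x : ℝ) (hx : 0 ≤ x) (m : ℕ) :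
    x ^ m * Real.exp (-(2 * x)) ≤ ((m : ℝ) / (2 * Real.exp 1)) ^ m := by
  have h := aux_pow_le_pow_mul_exp (2 * x) (by linarith) m
  rw [div_pow, le_div_iff₀ (by positivity)]
  have hee : Real.exp (2*x - m) * Real.exp (-(2*x)) * Real.exp ((m:ℕ) * (1:ℝ)) = 1 := by
    have hz : (2*x - m) + (-(2*x)) + ((m:ℕ) * (1:ℝ)) = 0 := by push_cast; ring
    rw [← Real.exp_add, ← Real.exp_add, hz, Real.exp_zero]
  calc x ^ m * Real.exp (-(2 * x)) * (2 * Real.exp 1) ^ m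
      = (2*x) ^ m * Real.exp (-(2*x)) * Real.exp 1 ^ m := by
        rw [mul_pow, mul_pow]; ring
    _ ≤ ((m:ℝ) ^ m * Real.exp (2*x - m)) * Real.exp (-(2*x)) * Real.exp 1 ^ m := by
        have hnn : (0:ℝ) ≤ Real.exp (-(2*x)) * Real.exp 1 ^ m := by positivity
        calc (2*x) ^ m * Real.exp (-(2*x)) * Real.exp 1 ^ m
            = (2*x) ^ m * (Real.exp (-(2*x)) * Real.exp 1 ^ m) := by ring
          _ ≤ ((m:ℝ) ^ m * Real.exp (2*x - m)) * (Real.exp (-(2*x)) * Real.exp 1 ^ m) :=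
              mul_le_mul_of_nonneg_right h hnn
          _ = ((m:ℝ) ^ m * Real.exp (2*x - m)) * Real.exp (-(2*x)) * Real.exp 1 ^ m := by ring
    _ = (m:ℝ) ^ m * (Real.exp (2*x - m) * Real.exp (-(2*x)) * Real.exp ((m:ℕ) * (1:ℝ))) := by
        rw [Real.exp_nat_mul]; ring
    _ = (m:ℝ) ^ m := by rw [hee, mul_one]

lemma aux_sq_eq_exp {x : ℝ} (hx : 0 < x) : x ^ 2 = Real.exp (2 * Real.log x) := by
  rw [two_mul, Real.exp_add, Real.exp_log hx]; ring

lemma aux_g_le_gmax {x : ℝ} (hx : 1 ≤ x) (m : ℕ) :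
    Real.log x ^ m / x ^ 2 ≤ ((m : ℝ) / (2 * Real.exp 1)) ^ m := by
  have hx0 : (0:ℝ) < x := lt_of_lt_of_le one_pos hx
  have hlog : 0 ≤ Real.log x := Real.log_nonneg hx
  have h := aux_gmax_bound (Real.log x) hlog m
  rw [aux_sq_eq_exp hx0, div_eq_mul_inv, ← Real.exp_neg]
  exact h

lemma aux_g_antitone {x y : ℝ} (m : ℕ) (hx : 1 ≤ x) (hxy : x ≤ y)
    (hm : (m : ℝ) ≤ 2 * Real.log x) :
    Real.log y ^ m / y ^ 2 ≤ Real.log x ^ m / x ^ 2 := by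
  have hx0 : (0:ℝ) < x := lt_of_lt_of_le one_pos hx
  have hy0 : (0:ℝ) < y := lt_of_lt_of_le hx0 hxy
  rcases Nat.eq_zero_or_pos m with rfl | hmpos
  · simp only [pow_zero]
    apply div_le_div_of_nonneg_left one_pos.le (by positivity)
    exact pow_le_pow_left₀ hx0.le hxy 2
  · have hmR : (0:ℝ) < (m:ℝ) := by exact_mod_cast hmpos
    have ha : 0 < Real.log x := by linarith
    set a := Real.log x
    set b := Real.log y
    have hab : a ≤ b := Real.log_le_log hx0 hxy
    have hb : 0 < b := lt_of_lt_of_le ha hab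
    rw [div_le_div_iff₀ (by positivity) (by positivity)]
    -- b^m * x^2 ≤ a^m * y^2
    have hba : (b / a) ^ m ≤ Real.exp (2 * (b - a)) := by
      have h1 : Real.log (b / a) ≤ b / a - 1 := Real.log_le_sub_one_of_pos (by positivity)
      have h2 : (m:ℝ) * Real.log (b / a) ≤ 2 * (b - a) := by
        have h3 : Real.log (b/a) ≤ (b - a) / a := by
          rw [div_sub' ha.ne'] at h1
          convert h1 using 2
          ring
        calc (m:ℝ) * Real.log (b/a) ≤ (m:ℝ) * ((b-a)/a) := by
              apply mul_le_mul_of_nonneg_left h3 hmR.le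
          _ ≤ 2 * a * ((b-a)/a) := by
              exact mul_le_mul_of_nonneg_right hm (div_nonneg (by linarith) ha.le)
          _ = 2 * (b - a) := by field_simp
      calc (b/a)^m = Real.exp ((m:ℕ) * Real.log (b/a)) := by
            rw [Real.exp_nat_mul, Real.exp_log (by positivity)]
        _ ≤ Real.exp (2 * (b - a)) := Real.exp_le_exp.2 h2
    have hxe : x ^ 2 = Real.exp (2 * a) := aux_sq_eq_exp hx0
    have hye : y ^ 2 = Real.exp (2 * b) := aux_sq_eq_exp hy0
    have hbm : b ^ m = a ^ m * (b/a) ^ m := by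
      rw [← mul_pow]
      congr 1
      field_simp
    calc b ^ m * x ^ 2 = a ^ m * ((b/a)^m * x^2) := by rw [hbm]; ring
      _ ≤ a ^ m * (Real.exp (2*(b-a)) * x^2) := by
          apply mul_le_mul_of_nonneg_left _ (by positivity)
          exact mul_le_mul_of_nonneg_right hba (by positivity)
      _ = a ^ m * y ^ 2 := by
          rw [hxe, hye, ← Real.exp_add]
          congr 2
          ring

lemma aux_exp_one_le : Real.exp 1 ≤ 2.7182818286 := Real.exp_one_lt_d9.le

lemma aux_exp_half_le_two : Real.exp (1/2 : ℝ) ≤ 2 := by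
  have h : Real.exp (1/2 : ℝ) ^ (2:ℕ) = Real.exp 1 := by
    rw [← Real.exp_nat_mul]; norm_num
  nlinarith [Real.exp_pos (1/2 : ℝ), aux_exp_one_le]

lemma aux_exp_third_le_two : Real.exp (1/3 : ℝ) ≤ 2 := by
  have h : Real.exp (1/3 : ℝ) ^ (3:ℕ) = Real.exp 1 := by
    rw [← Real.exp_nat_mul]; norm_num
  by_contra hc
  push_neg at hc
  have h2 : (2:ℝ)^(3:ℕ) < Real.exp (1/3:ℝ)^(3:ℕ) := by
    apply pow_lt_pow_left₀ hc (by norm_num) (by norm_num)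
  rw [h] at h2
  nlinarith [aux_exp_one_le]

lemma aux_exp_two_thirds_le_two : Real.exp (2/3 : ℝ) ≤ 2 := by
  have h : Real.exp (2/3 : ℝ) ^ (3:ℕ) = Real.exp 1 ^ (2:ℕ) := by
    rw [← Real.exp_nat_mul, ← Real.exp_nat_mul]; norm_num
  by_contra hc
  push_neg at hc
  have h2 : (2:ℝ)^(3:ℕ) < Real.exp (2/3:ℝ)^(3:ℕ) := by
    apply pow_lt_pow_left₀ hc (by norm_num) (by norm_num)
  rw [h] at h2
  nlinarith [aux_exp_one_le, Real.exp_pos 1]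

lemma aux_exp_three_le : Real.exp 3 ≤ 21 := by
  have h : Real.exp 3 = Real.exp 1 ^ (3:ℕ) := by
    rw [← Real.exp_nat_mul]; norm_num
  have h2 := pow_le_pow_left₀ (Real.exp_pos 1).le aux_exp_one_le 3
  rw [← h] at h2
  nlinarith [h2]

lemma aux_three_pow_le (m : ℕ) : (3:ℝ)^m ≤ 3 * (Nat.factorial (m+1)) := by
  induction m with
  | zero => norm_num
  | succ n ih =>
      have h1 : (3:ℝ)^(n+1) = 3 * 3^n := by ring
      have h2 : (Nat.factorial (n+2) : ℝ) = (n+2) * (Nat.factorial (n+1)) := by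
        rw [Nat.factorial_succ]; push_cast; ring
      rcases Nat.eq_zero_or_pos n with rfl | hn
      · norm_num [Nat.factorial]
      · have hn2 : (3:ℝ) ≤ (n+2 : ℝ) := by
          have : (1:ℝ) ≤ (n:ℝ) := by exact_mod_cast hn
          linarith
        have hfpos : (0:ℝ) < (Nat.factorial (n+1) : ℝ) := by positivity
        calc (3:ℝ)^(n+1) = 3 * 3^n := h1
          _ ≤ 3 * (3 * (Nat.factorial (n+1))) := by linarith
          _ ≤ 3 * ((n+2) * (Nat.factorial (n+1))) := by nlinarith
          _ = 3 * (Nat.factorial (n+2)) := by rw [h2]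
lemma aux_twelve_pow_le (m : ℕ) (hm : 1 ≤ m) : (12:ℝ)^m ≤ 22 * (m:ℝ)^(m+1) := by
  have step : ∀ n : ℕ, 5 ≤ n → (12:ℝ)^n ≤ 22 * (n:ℝ)^(n+1) →
      (12:ℝ)^(n+1) ≤ 22 * ((n+1:ℕ):ℝ)^(n+2) := by
    intro n hn ih
    have hnR : (5:ℝ) ≤ (n:ℝ) := by exact_mod_cast hn
    have hn0 : (0:ℝ) < (n:ℝ) := by linarith
    have hb : (1:ℝ) + (n+1 : ℕ) * (1/(n:ℝ)) ≤ (1 + 1/(n:ℝ))^(n+1) := by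
      apply one_add_mul_le_pow
      have : (0:ℝ) < 1/(n:ℝ) := by positivity
      linarith
    have hb2 : (2:ℝ) ≤ (1 + 1/(n:ℝ))^(n+1) := by
      have h1 : (1:ℝ) ≤ (n+1 : ℕ) * (1/(n:ℝ)) := by
        push_cast
        rw [mul_one_div, le_div_iff₀ hn0]
        linarith
      linarith
    have hpow : ((n:ℝ)+1)^(n+1) = (n:ℝ)^(n+1) * (1 + 1/(n:ℝ))^(n+1) := by
      rw [← mul_pow]
      congr 1
      field_simp
    have h2 : 2 * (n:ℝ)^(n+1) ≤ ((n:ℝ)+1)^(n+1) := by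
      rw [hpow]
      nlinarith [pow_pos hn0 (n+1)]
    have hnp : (0:ℝ) < ((n:ℝ)+1)^(n+1) := by positivity
    calc (12:ℝ)^(n+1) = 12 * 12^n := by ring
      _ ≤ 12 * (22 * (n:ℝ)^(n+1)) := by nlinarith [pow_pos (by norm_num : (0:ℝ) < 12) n]
      _ = 22 * (12 * (n:ℝ)^(n+1)) := by ring
      _ ≤ 22 * (2 * ((n:ℝ)+1) * (n:ℝ)^(n+1)) := by nlinarith [pow_pos hn0 (n+1)]
      _ ≤ 22 * (((n:ℝ)+1) * ((n:ℝ)+1)^(n+1)) := by nlinarith [pow_pos hn0 (n+1)]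
      _ = 22 * ((n+1:ℕ):ℝ)^(n+2) := by push_cast; ring
  have main : ∀ n : ℕ, 5 ≤ n → (12:ℝ)^n ≤ 22 * (n:ℝ)^(n+1) := by
    intro n hn
    induction n, hn using Nat.le_induction with
    | base => norm_num
    | succ n hn ih => exact step n hn ih
  rcases lt_or_ge m 5 with h | h
  · interval_cases m <;> norm_num
  · exact main m h

lemma aux_expL (L : ℝ) (hL : 1 ≤ L) (m : ℕ) (h6 : 6*L ≤ (m:ℝ)) :
    Real.exp L ≤ Real.exp 3 * ((m:ℝ)+1) * L^m := by
  have hLpow : (1:ℝ) ≤ L^m := by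
    have := pow_le_pow_left₀ (by norm_num : (0:ℝ) ≤ 1) hL m
    simpa using this
  have hm0 : (0:ℝ) ≤ (m:ℝ) := Nat.cast_nonneg m
  rcases le_or_gt L 3 with h3 | h3
  · have h1 : Real.exp L ≤ Real.exp 3 := Real.exp_le_exp.2 h3
    have hmul : (1:ℝ) ≤ ((m:ℝ)+1)*L^m := by nlinarith
    calc Real.exp L ≤ Real.exp 3 := h1
      _ = Real.exp 3 * 1 := (mul_one _).symm
      _ ≤ Real.exp 3 * (((m:ℝ)+1)*L^m) := by
          exact mul_le_mul_of_nonneg_left hmul (Real.exp_pos 3).le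
      _ = Real.exp 3 * ((m:ℝ)+1) * L^m := by ring
  · have hL0 : (0:ℝ) < L := by linarith
    have he : Real.exp 1 ≤ L := by nlinarith [aux_exp_one_le]
    have hlogL : 1 ≤ Real.log L := by
      rw [Real.le_log_iff_exp_le hL0]
      simpa using he
    calc Real.exp L ≤ Real.exp (6*L) := Real.exp_le_exp.2 (by linarith)
      _ ≤ Real.exp (Real.log L * (6*L)) := Real.exp_le_exp.2 (by nlinarith)
      _ = L ^ (6*L : ℝ) := (Real.rpow_def_of_pos hL0 (6*L)).symm
      _ ≤ L ^ ((m:ℕ):ℝ) := by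
          apply Real.rpow_le_rpow_of_exponent_le (by linarith) h6
      _ = L ^ m := Real.rpow_natCast L m
      _ = 1 * L^m := (one_mul _).symm
      _ ≤ (Real.exp 3 * ((m:ℝ)+1)) * L^m := by
          apply mul_le_mul_of_nonneg_right _ (by positivity)
          nlinarith [Real.one_le_exp (by norm_num : (0:ℝ) ≤ 3)]
      _ = Real.exp 3 * ((m:ℝ)+1) * L^m := by ring

lemma aux_theta (k N : ℕ) :
    ∑ n ∈ range (N+1), (if n.Prime ∧ k < n then Real.log n else 0) ≤ Real.log 4 * N := by
  have h1 : ∀ n : ℕ, (if n.Prime ∧ k < n then Real.log n else 0)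
      ≤ (if n.Prime then Real.log n else 0) := by
    intro n
    by_cases hp : n.Prime
    · by_cases hk : k < n
      · simp [hp, hk]
      · simp only [hp, hk, and_false, if_false, true_and, if_true]
        exact Real.log_nonneg (by exact_mod_cast hp.one_lt.le)
    · simp [hp]
  calc ∑ n ∈ range (N+1), (if n.Prime ∧ k < n then Real.log n else 0)
      ≤ ∑ n ∈ range (N+1), (if n.Prime then Real.log n else 0) :=
        Finset.sum_le_sum fun n _ => h1 n
    _ = ∑ p ∈ (range (N+1)).filter Nat.Prime, Real.log p := (Finset.sum_filter _ _).symm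
    _ = Real.log (primorial N : ℝ) := by
        unfold primorial
        push_cast
        rw [Real.log_prod]
        intro p hp
        have := (Finset.mem_filter.1 hp).2.pos
        positivity
    _ ≤ Real.log ((4:ℝ) ^ N) := by
        apply Real.log_le_log (by exact_mod_cast primorial_pos N)
        exact_mod_cast primorial_le_4_pow N
    _ = Real.log 4 * N := by rw [Real.log_pow]; ring

lemma aux_abel (k : ℕ) (A : ℝ) (c G : ℕ → ℝ) (hc : ∀ n, 0 ≤ c n) (hG : ∀ n, 0 ≤ G n)
    (hGanti : ∀ n, k + 1 ≤ n → G (n+1) ≤ G n)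
    (hck : ∀ n, n ≤ k → c n = 0)
    (hθ : ∀ N : ℕ, ∑ n ∈ range (N+1), c n ≤ A * N) :
    ∀ N, k ≤ N →
      ∑ n ∈ range (N+1), c n * G n
        + (A * N - ∑ n ∈ range (N+1), c n) * G (N+1)
      ≤ A * ((k : ℝ) * G (k+1) + ∑ m ∈ Icc (k+1) N, G m) := by
  intro N hN
  induction N, hN using Nat.le_induction with
  | base =>
      have hz : ∀ n ∈ range (k+1), c n = 0 := fun n hn =>
        hck n (Nat.lt_succ_iff.1 (Finset.mem_range.1 hn))
      have h0 : ∑ n ∈ range (k+1), c n = 0 := Finset.sum_eq_zero hz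
      have h0' : ∑ n ∈ range (k+1), c n * G n = 0 :=
        Finset.sum_eq_zero fun n hn => by rw [hz n hn, zero_mul]
      have he : Icc (k+1) k = (∅ : Finset ℕ) := Finset.Icc_eq_empty (by omega)
      rw [h0, h0', he]
      simp only [Finset.sum_empty, sub_zero, zero_add, add_zero]
      exact le_of_eq (by ring)
  | succ N hN ih =>
      push_cast
      have hsum : ∑ n ∈ range (N+1+1), c n * G n
          = ∑ n ∈ range (N+1), c n * G n + c (N+1) * G (N+1) := Finset.sum_range_succ _ _
      have hsumc : ∑ n ∈ range (N+1+1), c n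
          = ∑ n ∈ range (N+1), c n + c (N+1) := Finset.sum_range_succ _ _
      have hIcc : ∑ m ∈ Icc (k+1) (N+1), G m = ∑ m ∈ Icc (k+1) N, G m + G (N+1) :=
        Finset.sum_Icc_succ_top (by omega) _
      have hkey : c (N+1) * G (N+1) + (A * (N+1) - ∑ n ∈ range (N+1+1), c n) * G (N+1+1)
          ≤ (A * (N+1) - ∑ n ∈ range (N+1), c n) * G (N+1) := by
        have h1 : (0:ℝ) ≤ A * (N+1) - ∑ n ∈ range (N+1+1), c n := by
          have := hθ (N+1)
          push_cast at this ⊢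
          linarith
        have h2 : G (N+1+1) ≤ G (N+1) := hGanti (N+1) (by omega)
        have h3 : (A * (N+1) - ∑ n ∈ range (N+1+1), c n) * G (N+1+1)
            ≤ (A * (N+1) - ∑ n ∈ range (N+1+1), c n) * G (N+1) :=
          mul_le_mul_of_nonneg_left h2 h1
        rw [hsumc] at h3 ⊢
        nlinarith [hc (N+1), hG (N+1)]
      have hAB : (A * (N+1) - ∑ n ∈ range (N+1), c n) * G (N+1)
          = (A * N - ∑ n ∈ range (N+1), c n) * G (N+1) + A * G (N+1) := by
        push_cast
        ring
      calc ∑ n ∈ range (N+1+1), c n * G n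
            + (A * (N+1) - ∑ n ∈ range (N+1+1), c n) * G (N+1+1)
          = ∑ n ∈ range (N+1), c n * G n
            + (c (N+1) * G (N+1)
              + (A * (N+1) - ∑ n ∈ range (N+1+1), c n) * G (N+1+1)) := by
            rw [hsum]; ring
        _ ≤ ∑ n ∈ range (N+1), c n * G n
            + ((A * N - ∑ n ∈ range (N+1), c n) * G (N+1) + A * G (N+1)) := by
            rw [← hAB]; linarith
        _ ≤ A * ((k : ℝ) * G (k+1) + ∑ m ∈ Icc (k+1) N, G m) + A * G (N+1) := by
            linarith
        _ = A * ((k : ℝ) * G (k+1) + ∑ m ∈ Icc (k+1) (N+1), G m) := by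
            rw [hIcc]; ring

lemma aux_abel' (k : ℕ) (A : ℝ) (hA : 0 ≤ A) (c G : ℕ → ℝ) (hc : ∀ n, 0 ≤ c n)
    (hG : ∀ n, 0 ≤ G n)
    (hGanti : ∀ n, k + 1 ≤ n → G (n+1) ≤ G n)
    (hck : ∀ n, n ≤ k → c n = 0)
    (hθ : ∀ N : ℕ, ∑ n ∈ range (N+1), c n ≤ A * N) :
    ∀ M : ℕ, ∑ n ∈ range M, c n * G n
      ≤ A * ((k : ℝ) * G (k+1) + ∑ m ∈ Icc (k+1) (M + k), G m) := by
  intro M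
  have h1 : ∑ n ∈ range M, c n * G n ≤ ∑ n ∈ range (M + k + 1), c n * G n := by
    apply Finset.sum_le_sum_of_subset_of_nonneg
    · exact Finset.range_subset_range.2 (by omega)
    · intro n _ _
      exact mul_nonneg (hc n) (hG n)
  have h2 := aux_abel k A c G hc hG hGanti hck hθ (M + k) (by omega)
  have h3 : (0:ℝ) ≤ (A * (M+k) - ∑ n ∈ range (M+k+1), c n) * G (M+k+1) := by
    apply mul_nonneg _ (hG _)
    have := hθ (M+k)
    push_cast at this ⊢
    linarith
  push_cast at h2 ⊢
  linarith

noncomputable def auxF (s : ℕ) (t : ℝ) : ℝ :=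
  -(∑ j ∈ Finset.range s, ((Nat.factorial (s-1) : ℝ) / (Nat.factorial j)) * Real.log t ^ j) / t

lemma aux_poly_identity (s : ℕ) (hs : 0 < s) (x : ℝ) :
    ∑ j ∈ range s, ((Nat.factorial (s-1) : ℝ) / (Nat.factorial j)) * x ^ j
      - ∑ j ∈ range s, ((Nat.factorial (s-1) : ℝ) / (Nat.factorial j)) * (j * x ^ (j-1))
    = x ^ (s-1) := by
  obtain ⟨m, rfl⟩ : ∃ m, s = m + 1 := ⟨s - 1, (Nat.succ_pred_eq_of_pos hs).symm⟩
  simp only [Nat.add_sub_cancel]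
  rw [Finset.sum_range_succ (fun j => ((Nat.factorial m : ℝ) / (Nat.factorial j)) * x ^ j)]
  rw [Finset.sum_range_succ' (fun j => ((Nat.factorial m : ℝ) / (Nat.factorial j)) * (j * x ^ (j-1)))]
  have h1 : ∀ i, ((Nat.factorial m : ℝ) / (Nat.factorial (i+1))) * ((i+1 : ℕ) * x ^ i)
      = ((Nat.factorial m : ℝ) / (Nat.factorial i)) * x ^ i := by
    intro i
    rw [Nat.factorial_succ]
    push_cast
    have : (Nat.factorial i : ℝ) ≠ 0 := by positivity
    field_simp
  have h2 : ∑ i ∈ range m, ((Nat.factorial m : ℝ) / (Nat.factorial (i+1))) * ((i+1 : ℕ) * x ^ (i+1-1))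
      = ∑ i ∈ range m, ((Nat.factorial m : ℝ) / (Nat.factorial i)) * x ^ i := by
    apply Finset.sum_congr rfl
    intro i _
    simpa using h1 i
  rw [h2]
  simp [Nat.div_self, Nat.factorial]
  field_simp

lemma aux_hasDerivAt (s : ℕ) (hs : 0 < s) (t : ℝ) (ht : 0 < t) :
    HasDerivAt (auxF s) (Real.log t ^ (s-1) / t ^ 2) t := by
  have hS : HasDerivAt (fun u => ∑ j ∈ range s,
      ((Nat.factorial (s-1) : ℝ) / (Nat.factorial j)) * Real.log u ^ j)
      (∑ j ∈ range s, ((Nat.factorial (s-1) : ℝ) / (Nat.factorial j)) * (j * Real.log t ^ (j-1) * t⁻¹)) t := by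
    apply HasDerivAt.fun_sum
    intro j _
    exact ((Real.hasDerivAt_log ht.ne').pow j).const_mul _
  have hneg : HasDerivAt (fun u => -(∑ j ∈ range s,
      ((Nat.factorial (s-1) : ℝ) / (Nat.factorial j)) * Real.log u ^ j))
      (-(∑ j ∈ range s, ((Nat.factorial (s-1) : ℝ) / (Nat.factorial j)) * (j * Real.log t ^ (j-1) * t⁻¹))) t := hS.neg
  have hid : HasDerivAt (fun u : ℝ => u) 1 t := hasDerivAt_id t
  have hfact : ∑ j ∈ range s, ((Nat.factorial (s-1) : ℝ) / (Nat.factorial j)) * (j * Real.log t ^ (j-1) * t⁻¹)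
      = (∑ j ∈ range s, ((Nat.factorial (s-1) : ℝ) / (Nat.factorial j)) * (j * Real.log t ^ (j-1))) * t⁻¹ := by
    rw [Finset.sum_mul]
    apply Finset.sum_congr rfl
    intro j _
    ring
  have hD := hneg.div hid ht.ne'
  rw [hfact] at hD
  have hpoly := aux_poly_identity s hs (Real.log t)
  set P := ∑ j ∈ range s, ((Nat.factorial (s-1) : ℝ) / (Nat.factorial j)) * Real.log t ^ j with hP
  set Q := ∑ j ∈ range s, ((Nat.factorial (s-1) : ℝ) / (Nat.factorial j)) * (j * Real.log t ^ (j-1)) with hQ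
  have htne : t ≠ 0 := ht.ne'
  refine hD.congr_deriv ?_
  rw [← hpoly]
  field_simp
  ring

lemma aux_contOn (s : ℕ) {A : Set ℝ} (hA : ∀ x ∈ A, (0:ℝ) < x) :
    ContinuousOn (fun t : ℝ => Real.log t ^ (s-1) / t^2) A := by
  apply ContinuousOn.div
  · exact (Real.continuousOn_log.mono (fun x hx => by
      simp only [Set.mem_compl_iff, Set.mem_singleton_iff]
      exact (hA x hx).ne')).pow _
  · exact (continuous_pow 2).continuousOn
  · intro x hx
    exact pow_ne_zero 2 (hA x hx).ne'

lemma aux_intervalIntegrable (s : ℕ) (a b : ℝ) (ha : 0 < a) (hab : a ≤ b) :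
    IntervalIntegrable (fun t : ℝ => Real.log t ^ (s-1) / t^2) MeasureTheory.volume a b := by
  apply ContinuousOn.intervalIntegrable
  apply aux_contOn
  intro x hx
  rw [Set.uIcc_of_le hab] at hx
  exact lt_of_lt_of_le ha hx.1

lemma aux_FTC (s : ℕ) (hs : 0 < s) (a b : ℝ) (ha : 0 < a) (hab : a ≤ b) :
    ∫ t in a..b, Real.log t ^ (s-1) / t^2 = auxF s b - auxF s a := by
  apply intervalIntegral.integral_eq_sub_of_hasDerivAt
  · intro t ht
    rw [Set.uIcc_of_le hab] at ht
    exact aux_hasDerivAt s hs t (lt_of_lt_of_le ha ht.1)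
  · exact aux_intervalIntegrable s a b ha hab

lemma aux_F_nonpos (s : ℕ) (t : ℝ) (ht : 1 ≤ t) : auxF s t ≤ 0 := by
  unfold auxF
  apply div_nonpos_of_nonpos_of_nonneg
  · rw [neg_nonpos]
    apply Finset.sum_nonneg
    intro j _
    have : (0:ℝ) ≤ Real.log t := Real.log_nonneg ht
    positivity
  · linarith

lemma aux_negF_nonneg (s : ℕ) (t : ℝ) (ht : 1 ≤ t) : 0 ≤ -auxF s t := by
  simpa using aux_F_nonpos s t ht

lemma aux_sum_le_negF (s : ℕ) (hs : 0 < s) (m₀ : ℕ) (hm₀ : 1 ≤ m₀)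
    (hlog : ((s-1 : ℕ) : ℝ) ≤ 2 * Real.log m₀) (N : ℕ) :
    ∑ n ∈ Ioc m₀ N, Real.log n ^ (s-1) / (n:ℝ)^2 ≤ -auxF s m₀ := by
  rcases le_or_gt N m₀ with hN | hN
  · rw [Finset.Ioc_eq_empty (by omega)]
    simpa using aux_negF_nonneg s m₀ (by exact_mod_cast hm₀)
  · have hm₀R : (1:ℝ) ≤ (m₀ : ℝ) := by exact_mod_cast hm₀
    have hm₀pos : (0:ℝ) < (m₀ : ℝ) := by linarith
    set a : ℕ → ℝ := fun i => (m₀:ℝ) + i with ha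
    have ha1 : ∀ i : ℕ, (1:ℝ) ≤ a i := by
      intro i
      have : (0:ℝ) ≤ (i:ℝ) := Nat.cast_nonneg i
      simp only [ha]
      linarith
    have hasucc : ∀ i : ℕ, a (i+1) = (m₀:ℝ) + ((i:ℝ)+1) := by
      intro i; simp only [ha]; push_cast; ring
    have hterm : ∀ i : ℕ, Real.log ((m₀+1+i : ℕ):ℝ) ^ (s-1) / (((m₀+1+i : ℕ)):ℝ)^2
        ≤ ∫ t in a i..a (i+1), Real.log t ^ (s-1) / t^2 := by
      intro i
      have hcast : ((m₀+1+i : ℕ):ℝ) = (m₀:ℝ) + ((i:ℝ)+1) := by push_cast; ring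
      have hle : a i ≤ a (i+1) := by rw [hasucc]; simp only [ha]; linarith
      have hmono : ∀ x ∈ Set.Icc (a i) (a (i+1)),
          Real.log ((m₀:ℝ) + ((i:ℝ)+1)) ^ (s-1) / ((m₀:ℝ) + ((i:ℝ)+1))^2
            ≤ Real.log x ^ (s-1) / x^2 := by
        intro x hx
        have hx1 : (1:ℝ) ≤ x := le_trans (ha1 i) hx.1
        have hxm₀ : (m₀:ℝ) ≤ x := by
          have : (0:ℝ) ≤ (i:ℝ) := Nat.cast_nonneg i
          have := hx.1
          simp only [ha] at this
          linarith
        have hxy : x ≤ (m₀:ℝ) + ((i:ℝ)+1) := by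
          have := hx.2
          rwa [hasucc] at this
        apply aux_g_antitone (s-1) hx1 hxy
        calc ((s-1 : ℕ):ℝ) ≤ 2 * Real.log m₀ := hlog
          _ ≤ 2 * Real.log x := by
            have := Real.log_le_log hm₀pos hxm₀
            linarith
      have hconst : ∫ t in a i..a (i+1),
          (Real.log ((m₀:ℝ) + ((i:ℝ)+1)) ^ (s-1) / ((m₀:ℝ) + ((i:ℝ)+1))^2)
          = Real.log ((m₀:ℝ) + ((i:ℝ)+1)) ^ (s-1) / ((m₀:ℝ) + ((i:ℝ)+1))^2 := by
        rw [intervalIntegral.integral_const]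
        have : a (i+1) - a i = 1 := by rw [hasucc]; simp only [ha]; ring
        rw [this, one_smul]
      rw [hcast]
      rw [← hconst]
      apply intervalIntegral.integral_mono_on hle intervalIntegrable_const
        (aux_intervalIntegrable s _ _ (lt_of_lt_of_le one_pos (ha1 i)) hle) hmono
    have hint : ∀ i : ℕ, i < N - m₀ →
        IntervalIntegrable (fun t : ℝ => Real.log t ^ (s-1) / t^2)
          MeasureTheory.volume (a i) (a (i+1)) := by
      intro i _
      apply aux_intervalIntegrable s _ _ (lt_of_lt_of_le one_pos (ha1 i))
      rw [hasucc]; simp only [ha]; linarith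
    have hadj := intervalIntegral.sum_integral_adjacent_intervals hint
    have hreindex : ∑ n ∈ Ioc m₀ N, Real.log n ^ (s-1) / (n:ℝ)^2
        = ∑ i ∈ range (N - m₀), Real.log ((m₀+1+i : ℕ):ℝ) ^ (s-1) / (((m₀+1+i : ℕ)):ℝ)^2 := by
      rw [← Finset.Ico_add_one_add_one_eq_Ioc, Finset.sum_Ico_eq_sum_range]
      simp only [Nat.add_sub_add_right]
    have haN : a (N - m₀) = (N:ℝ) := by
      simp only [ha]
      rw [Nat.cast_sub hN.le]
      ring
    have ha0 : a 0 = (m₀:ℝ) := by simp [ha]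
    calc ∑ n ∈ Ioc m₀ N, Real.log n ^ (s-1) / (n:ℝ)^2
        = ∑ i ∈ range (N - m₀), Real.log ((m₀+1+i : ℕ):ℝ) ^ (s-1) / (((m₀+1+i : ℕ)):ℝ)^2 := hreindex
      _ ≤ ∑ i ∈ range (N - m₀), ∫ t in a i..a (i+1), Real.log t ^ (s-1) / t^2 :=
          Finset.sum_le_sum fun i _ => hterm i
      _ = ∫ t in (a 0)..(a (N - m₀)), Real.log t ^ (s-1) / t^2 := hadj
      _ = ∫ t in (m₀:ℝ)..(N:ℝ), Real.log t ^ (s-1) / t^2 := by rw [ha0, haN]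
      _ = auxF s N - auxF s m₀ := aux_FTC s hs _ _ hm₀pos (by exact_mod_cast hN.le)
      _ ≤ -auxF s m₀ := by
          have := aux_F_nonpos s N (by exact_mod_cast le_trans hm₀ hN.le)
          linarith

section pieces
variable (k m M m₀ : ℕ) (L E gmax X : ℝ) (G : ℕ → ℝ)

lemma piece_prelim (hk : 0 < k) (hL1 : 1 ≤ L)
    (hXdef : X = (Nat.factorial (m+1):ℝ) * L^m) :
    0 < X ∧ (1:ℝ) ≤ L^m ∧ ((Nat.factorial m : ℝ)) ≤ X := by
  have hLm1 : (1:ℝ) ≤ L^m := by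
    have := pow_le_pow_left₀ (zero_le_one) hL1 m
    simpa using this
  have hXpos : 0 < X := by
    rw [hXdef]
    have : (0:ℝ) < (Nat.factorial (m+1) : ℝ) := by positivity
    nlinarith
  refine ⟨hXpos, hLm1, ?_⟩
  rw [hXdef]
  have h1 : (Nat.factorial m : ℝ) ≤ (Nat.factorial (m+1) : ℝ) := by
    exact_mod_cast Nat.factorial_le (by omega)
  have h2 : (0:ℝ) < (Nat.factorial (m+1) : ℝ) := by positivity
  nlinarith [hLm1]

set_option maxHeartbeats 1600000 in
lemma piece_A (hk : 0 < k) (hL1 : 1 ≤ L) (hek2 : (k:ℝ)+2 = Real.exp L)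
    (hE1 : 1 ≤ E) (hMle : (M:ℝ) ≤ E + 1) (hEsq : E^2 = Real.exp (m:ℝ))
    (hgmaxdef : gmax = ((m:ℝ)/(2*Real.exp 1))^m)
    (hGdef : G = fun n => if n ≤ M then gmax else Real.log (n:ℝ)^m/(n:ℝ)^2)
    (hXdef : X = (Nat.factorial (m+1):ℝ) * L^m) :
    (k:ℝ) * G (k+1) * (k:ℝ) ≤ 27 * X := by
  obtain ⟨hXpos, hLm1, hfactle⟩ := piece_prelim k m L X hk hL1 hXdef
  have hk1R : (1:ℝ) ≤ (k:ℝ) := by exact_mod_cast hk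
  have hkpos : (0:ℝ) < (k:ℝ) := by linarith
  have hgmax0 : 0 ≤ gmax := by rw [hgmaxdef]; positivity
  have hLeq : L = Real.log ((k:ℝ)+2) := by rw [hek2, Real.log_exp]
  by_cases hkM : k + 1 ≤ M
  · have hGk : G (k+1) = gmax := by simp only [hGdef]; rw [if_pos hkM]
    rw [hGk]
    rcases le_total (6*L) (m:ℝ) with hc | hc
    · have hk2 : (k:ℝ)^2 ≤ Real.exp ((m:ℝ)*(1/3)) := by
        have he1 : ((k:ℝ)+2)^2 = Real.exp (2*L) := by
          rw [hek2, sq, ← Real.exp_add]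
          congr 1; ring
        have he2 : Real.exp (2*L) ≤ Real.exp ((m:ℝ)*(1/3)) :=
          Real.exp_le_exp.2 (by linarith)
        nlinarith
      have hmain : Real.exp ((m:ℝ)*(1/3)) * gmax ≤ (Nat.factorial m : ℝ) := by
        rw [Real.exp_nat_mul, hgmaxdef, ← mul_pow]
        calc (Real.exp (1/3) * ((m:ℝ)/(2*Real.exp 1)))^m
            ≤ ((m:ℝ)/Real.exp 1)^m := by
              apply pow_le_pow_left₀ (by positivity) _ m
              have heq : Real.exp (1/3:ℝ) * ((m:ℝ)/(2*Real.exp 1))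
                  = ((m:ℝ)/Real.exp 1) * (Real.exp (1/3:ℝ)/2) := by
                field_simp
              rw [heq]
              nlinarith [aux_exp_third_le_two,
                div_nonneg (Nat.cast_nonneg m) (Real.exp_pos 1).le]
          _ ≤ (Nat.factorial m : ℝ) := aux_div_exp_pow_le_factorial m
      calc (k:ℝ) * gmax * k = (k:ℝ)^2 * gmax := by ring
        _ ≤ Real.exp ((m:ℝ)*(1/3)) * gmax := mul_le_mul_of_nonneg_right hk2 hgmax0
        _ ≤ (Nat.factorial m : ℝ) := hmain
        _ ≤ X := hfactle
        _ ≤ 27 * X := by nlinarith [hXpos]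
    · have hk2M : (k:ℝ)+2 ≤ 3*E := by
        have hcast : ((k:ℝ)+1) ≤ (M:ℝ) := by exact_mod_cast hkM
        linarith [hMle, hE1]
      have hk2sq : (k:ℝ)^2 ≤ 9 * Real.exp (m:ℝ) := by
        rw [← hEsq]
        nlinarith [hE1, hkpos]
      have hmain2 : Real.exp (m:ℝ) * gmax = ((m:ℝ)/2)^m := by
        have hem : Real.exp (m:ℝ) = Real.exp 1 ^ m := by
          rw [← Real.exp_nat_mul, mul_one]
        rw [hgmaxdef, hem, ← mul_pow]
        congr 1
        have : Real.exp 1 ≠ 0 := (Real.exp_pos 1).ne'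
        field_simp
      have hfin : ((m:ℝ)/2)^m ≤ 3^m * L^m := by
        have heq : ((m:ℝ)/2)^m = 3^m * ((m:ℝ)/6)^m := by
          rw [← mul_pow]; congr 1; ring
        rw [heq]
        apply mul_le_mul_of_nonneg_left _ (by positivity)
        exact pow_le_pow_left₀ (by positivity) (by linarith) m
      have h3 := aux_three_pow_le m
      calc (k:ℝ) * gmax * k = (k:ℝ)^2 * gmax := by ring
        _ ≤ 9 * Real.exp (m:ℝ) * gmax := mul_le_mul_of_nonneg_right hk2sq hgmax0
        _ = 9 * (((m:ℝ)/2)^m) := by rw [mul_assoc, hmain2]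
        _ ≤ 9 * (3^m * L^m) := by linarith [hfin]
        _ ≤ 27 * X := by
            rw [hXdef]
            have hLpos : (0:ℝ) ≤ L^m := by positivity
            linarith [mul_le_mul_of_nonneg_right h3 hLpos]
  · have hGk : G (k+1) = Real.log ((k+1:ℕ):ℝ)^m/((k+1:ℕ):ℝ)^2 := by
      simp only [hGdef]; rw [if_neg hkM]
    rw [hGk]
    have hlogk1 : Real.log ((k+1:ℕ):ℝ) ≤ L := by
      rw [hLeq]
      apply Real.log_le_log (by positivity)
      push_cast; linarith
    have hlogk1n : 0 ≤ Real.log ((k+1:ℕ):ℝ) := by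
      apply Real.log_nonneg
      push_cast; linarith
    have hpow : Real.log ((k+1:ℕ):ℝ)^m ≤ L^m := pow_le_pow_left₀ hlogk1n hlogk1 m
    have hdiv : (k:ℝ)*(k:ℝ)/((k+1:ℕ):ℝ)^2 ≤ 1 := by
      rw [div_le_one (by positivity)]
      push_cast
      nlinarith
    have hk1pos : (0:ℝ) < ((k+1:ℕ):ℝ)^2 := by positivity
    calc (k:ℝ) * (Real.log ((k+1:ℕ):ℝ)^m/((k+1:ℕ):ℝ)^2) * k
        = (Real.log ((k+1:ℕ):ℝ)^m) * ((k:ℝ)*(k:ℝ)/((k+1:ℕ):ℝ)^2) := by ring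
      _ ≤ L^m * 1 := by
          apply mul_le_mul hpow hdiv (by positivity) (by positivity)
      _ = L^m := mul_one _
      _ ≤ X := by
          rw [hXdef]
          have hf1 : (1:ℝ) ≤ (Nat.factorial (m+1) : ℝ) := by
            exact_mod_cast Nat.one_le_iff_ne_zero.2 (Nat.factorial_ne_zero (m+1))
          nlinarith [pow_nonneg (le_trans zero_le_one hL1) m, hLm1]
      _ ≤ 27 * X := by nlinarith [hXpos]
set_option maxHeartbeats 1600000 in
lemma piece_B1 (hk : 0 < k) (hL1 : 1 ≤ L) (hek2 : (k:ℝ)+2 = Real.exp L)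
    (hE1 : 1 ≤ E) (hMle : (M:ℝ) ≤ E + 1) (hEsq : E^2 = Real.exp (m:ℝ))
    (hEdef : E = Real.exp ((m:ℝ)/2))
    (hgmaxdef : gmax = ((m:ℝ)/(2*Real.exp 1))^m)
    (hXdef : X = (Nat.factorial (m+1):ℝ) * L^m) :
    ((M - k : ℕ):ℝ) * gmax * k ≤ 12 * X := by
  obtain ⟨hXpos, hLm1, hfactle⟩ := piece_prelim k m L X hk hL1 hXdef
  have hk1R : (1:ℝ) ≤ (k:ℝ) := by exact_mod_cast hk
  have hkpos : (0:ℝ) < (k:ℝ) := by linarith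
  have hgmax0 : 0 ≤ gmax := by rw [hgmaxdef]; positivity
  have hM2E : (M:ℝ) ≤ 2*E := by linarith
  rcases le_or_gt M k with h | h
  · have hz : (M - k : ℕ) = 0 := by omega
    rw [hz]
    push_cast
    nlinarith [hXpos]
  · have hMk : ((M-k:ℕ):ℝ) ≤ (M:ℝ) := by exact_mod_cast Nat.sub_le M k
    have hkMR : (k:ℝ) ≤ (M:ℝ) := by exact_mod_cast h.le
    rcases le_total (6*L) (m:ℝ) with hc | hc
    · have hkE : (k:ℝ) ≤ Real.exp ((m:ℝ)*(1/6)) := by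
        have h1 : (k:ℝ) ≤ Real.exp L := by rw [← hek2]; linarith
        have h2 : Real.exp L ≤ Real.exp ((m:ℝ)*(1/6)) := Real.exp_le_exp.2 (by linarith)
        linarith
      have hEpos : (0:ℝ) < E := by linarith
      have hEE : E * Real.exp ((m:ℝ)*(1/6)) = Real.exp ((m:ℝ)*(2/3)) := by
        rw [hEdef, ← Real.exp_add]
        congr 1
        ring
      have step1 : ((M-k:ℕ):ℝ)*gmax*(k:ℝ) ≤ (2*E)*gmax*Real.exp ((m:ℝ)*(1/6)) := by
        have s1 : ((M-k:ℕ):ℝ)*gmax ≤ (2*E)*gmax :=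
          mul_le_mul_of_nonneg_right (le_trans hMk hM2E) hgmax0
        have s2 : ((M-k:ℕ):ℝ)*gmax*(k:ℝ) ≤ (2*E)*gmax*(k:ℝ) :=
          mul_le_mul_of_nonneg_right s1 hkpos.le
        have s3 : (2*E)*gmax*(k:ℝ) ≤ (2*E)*gmax*Real.exp ((m:ℝ)*(1/6)) :=
          mul_le_mul_of_nonneg_left hkE (by positivity)
        linarith
      have step3 : Real.exp ((m:ℝ)*(2/3)) * gmax ≤ (Nat.factorial m : ℝ) := by
        rw [Real.exp_nat_mul, hgmaxdef, ← mul_pow]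
        calc (Real.exp (2/3:ℝ) * ((m:ℝ)/(2*Real.exp 1)))^m
            ≤ ((m:ℝ)/Real.exp 1)^m := by
              apply pow_le_pow_left₀ (by positivity) _ m
              have heq : Real.exp (2/3:ℝ) * ((m:ℝ)/(2*Real.exp 1))
                  = ((m:ℝ)/Real.exp 1) * (Real.exp (2/3:ℝ)/2) := by
                field_simp
              rw [heq]
              nlinarith [aux_exp_two_thirds_le_two,
                div_nonneg (Nat.cast_nonneg m) (Real.exp_pos 1).le]
          _ ≤ (Nat.factorial m : ℝ) := aux_div_exp_pow_le_factorial m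
      calc ((M-k:ℕ):ℝ)*gmax*(k:ℝ) ≤ (2*E)*gmax*Real.exp ((m:ℝ)*(1/6)) := step1
        _ = 2*(E*Real.exp ((m:ℝ)*(1/6))*gmax) := by ring
        _ = 2*(Real.exp ((m:ℝ)*(2/3))*gmax) := by rw [hEE]
        _ ≤ 2*(Nat.factorial m : ℝ) := by linarith [step3]
        _ ≤ 2*X := by linarith [hfactle]
        _ ≤ 12*X := by nlinarith [hXpos]
    · have hmain2 : Real.exp (m:ℝ) * gmax = ((m:ℝ)/2)^m := by
        have hem : Real.exp (m:ℝ) = Real.exp 1 ^ m := by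
          rw [← Real.exp_nat_mul, mul_one]
        rw [hgmaxdef, hem, ← mul_pow]
        congr 1
        have : Real.exp 1 ≠ 0 := (Real.exp_pos 1).ne'
        field_simp
      have step1 : ((M-k:ℕ):ℝ)*gmax*(k:ℝ) ≤ (2*E)*gmax*(2*E) := by
        have s1 : ((M-k:ℕ):ℝ)*gmax ≤ (2*E)*gmax :=
          mul_le_mul_of_nonneg_right (le_trans hMk hM2E) hgmax0
        have s2 : ((M-k:ℕ):ℝ)*gmax*(k:ℝ) ≤ (2*E)*gmax*(k:ℝ) :=
          mul_le_mul_of_nonneg_right s1 hkpos.le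
        have s3 : (2*E)*gmax*(k:ℝ) ≤ (2*E)*gmax*(2*E) :=
          mul_le_mul_of_nonneg_left (le_trans hkMR hM2E) (by positivity)
        linarith
      have hfin : ((m:ℝ)/2)^m ≤ 3^m * L^m := by
        have heq : ((m:ℝ)/2)^m = 3^m * ((m:ℝ)/6)^m := by
          rw [← mul_pow]; congr 1; ring
        rw [heq]
        apply mul_le_mul_of_nonneg_left _ (by positivity)
        exact pow_le_pow_left₀ (by positivity) (by linarith) m
      have h3 := aux_three_pow_le m
      calc ((M-k:ℕ):ℝ)*gmax*(k:ℝ) ≤ (2*E)*gmax*(2*E) := step1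
        _ = 4*(E^2*gmax) := by ring
        _ = 4*(Real.exp (m:ℝ)*gmax) := by rw [hEsq]
        _ = 4*((m:ℝ)/2)^m := by rw [hmain2]
        _ ≤ 4*(3^m * L^m) := by linarith [hfin]
        _ ≤ 12 * X := by
            rw [hXdef]
            have hLpos : (0:ℝ) ≤ L^m := by positivity
            linarith [mul_le_mul_of_nonneg_right h3 hLpos]
set_option maxHeartbeats 1600000 in
lemma piece_B2 (hk : 0 < k) (hL1 : 1 ≤ L) (hek2 : (k:ℝ)+2 = Real.exp L)
    (hE1 : 1 ≤ E) (hMle : (M:ℝ) ≤ E + 1)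
    (hEdef : E = Real.exp ((m:ℝ)/2))
    (hm₀1 : 1 ≤ m₀)
    (hm₀cases : (M ≤ k ∧ m₀ = k) ∨ (k < M ∧ m₀ = M))
    (hlogk : Real.log (k:ℝ) ≤ L)
    (hXdef : X = (Nat.factorial (m+1):ℝ) * L^m) :
    (-auxF (m+1) ((m₀:ℕ):ℝ)) * k ≤ 44 * X := by
  obtain ⟨hXpos, hLm1, hfactle⟩ := piece_prelim k m L X hk hL1 hXdef
  have hk1R : (1:ℝ) ≤ (k:ℝ) := by exact_mod_cast hk
  have hkpos : (0:ℝ) < (k:ℝ) := by linarith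
  have hM2E : (M:ℝ) ≤ 2*E := by linarith
  have hm₀Rpos : (0:ℝ) < (m₀:ℝ) := by exact_mod_cast hm₀1
  have hm₀R1 : (1:ℝ) ≤ (m₀:ℝ) := by exact_mod_cast hm₀1
  have hlogm₀0 : 0 ≤ Real.log (m₀:ℝ) := Real.log_nonneg hm₀R1
  have hnegF : -auxF (m+1) ((m₀:ℕ):ℝ)
      = (∑ j ∈ range (m+1), ((Nat.factorial m:ℝ)/(Nat.factorial j)) * Real.log ((m₀:ℕ):ℝ)^j)
        /((m₀:ℕ):ℝ) := by
    simp only [auxF, Nat.add_sub_cancel, neg_div, neg_neg]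
  rcases hm₀cases with ⟨hMk, hm₀k⟩ | ⟨hkM, hm₀M⟩
  · have hsum : ∑ j ∈ range (m+1), ((Nat.factorial m:ℝ)/(Nat.factorial j)) * Real.log (k:ℝ)^j
        ≤ 3 * (Nat.factorial m:ℝ) * L^m := by
      have h1 : ∀ j ∈ range (m+1),
          ((Nat.factorial m:ℝ)/(Nat.factorial j)) * Real.log (k:ℝ)^j
            ≤ ((Nat.factorial m:ℝ)/(Nat.factorial j)) * L^m := by
        intro j hj
        apply mul_le_mul_of_nonneg_left _ (by positivity)
        calc Real.log (k:ℝ)^j ≤ L^j := pow_le_pow_left₀ (Real.log_nonneg hk1R) hlogk j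
          _ ≤ L^m := pow_le_pow_right₀ hL1 (Nat.lt_succ_iff.1 (Finset.mem_range.1 hj))
      calc ∑ j ∈ range (m+1), ((Nat.factorial m:ℝ)/(Nat.factorial j)) * Real.log (k:ℝ)^j
          ≤ ∑ j ∈ range (m+1), ((Nat.factorial m:ℝ)/(Nat.factorial j)) * L^m :=
            Finset.sum_le_sum h1
        _ = (∑ j ∈ range (m+1), (Nat.factorial m:ℝ)/(Nat.factorial j)) * L^m := by
            rw [Finset.sum_mul]
        _ ≤ (3*(Nat.factorial m:ℝ)) * L^m := by
            apply mul_le_mul_of_nonneg_right _ (by positivity)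
            have h2 : ∑ j ∈ range (m+1), (Nat.factorial m:ℝ)/(Nat.factorial j)
                = (Nat.factorial m:ℝ) * ∑ j ∈ range (m+1), (1:ℝ)^j/(Nat.factorial j) := by
              rw [Finset.mul_sum]
              apply Finset.sum_congr rfl
              intro j _
              rw [one_pow]
              ring
            rw [h2]
            have h3 := Real.sum_le_exp_of_nonneg zero_le_one (m+1)
            have h4 : Real.exp 1 ≤ 3 := by nlinarith [Real.exp_one_lt_d9]
            have h5 : (0:ℝ) ≤ (Nat.factorial m:ℝ) := by positivity
            nlinarith [mul_le_mul_of_nonneg_left (le_trans h3 h4) h5]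
        _ = 3*(Nat.factorial m:ℝ)*L^m := by ring
    have heq : (-auxF (m+1) ((m₀:ℕ):ℝ)) * k
        = ∑ j ∈ range (m+1), ((Nat.factorial m:ℝ)/(Nat.factorial j)) * Real.log (k:ℝ)^j := by
      rw [hnegF, hm₀k]
      field_simp
    rw [heq]
    calc ∑ j ∈ range (m+1), ((Nat.factorial m:ℝ)/(Nat.factorial j)) * Real.log (k:ℝ)^j
        ≤ 3 * (Nat.factorial m:ℝ) * L^m := hsum
      _ ≤ 44 * X := by
          rw [hXdef]
          have h1 : (Nat.factorial m : ℝ) ≤ (Nat.factorial (m+1) : ℝ) := by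
            exact_mod_cast Nat.factorial_le (by omega)
          have hLpos : (0:ℝ) ≤ L^m := by positivity
          nlinarith [mul_le_mul_of_nonneg_right h1 hLpos]
  · have hIle : -auxF (m+1) ((m₀:ℕ):ℝ) ≤ (Nat.factorial m:ℝ) := by
      rw [hnegF, div_le_iff₀ hm₀Rpos]
      have h2 : ∑ j ∈ range (m+1), ((Nat.factorial m:ℝ)/(Nat.factorial j)) * Real.log (m₀:ℝ)^j
          = (Nat.factorial m:ℝ) * ∑ j ∈ range (m+1), Real.log (m₀:ℝ)^j/(Nat.factorial j) := by
        rw [Finset.mul_sum]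
        apply Finset.sum_congr rfl
        intro j _
        ring
      rw [h2]
      have h3 := Real.sum_le_exp_of_nonneg hlogm₀0 (m+1)
      have h4 : Real.exp (Real.log (m₀:ℝ)) = (m₀:ℝ) := Real.exp_log hm₀Rpos
      calc (Nat.factorial m:ℝ) * ∑ j ∈ range (m+1), Real.log (m₀:ℝ)^j/(Nat.factorial j)
          ≤ (Nat.factorial m:ℝ) * Real.exp (Real.log (m₀:ℝ)) :=
            mul_le_mul_of_nonneg_left h3 (by positivity)
        _ = (Nat.factorial m:ℝ) * (m₀:ℝ) := by rw [h4]
    rcases le_total (6*L) (m:ℝ) with hc | hc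
    · have h5 := aux_expL L hL1 m hc
      have hkexp : (k:ℝ) ≤ Real.exp L := by rw [← hek2]; linarith
      calc (-auxF (m+1) ((m₀:ℕ):ℝ))*k ≤ (Nat.factorial m:ℝ)*k :=
            mul_le_mul_of_nonneg_right hIle hkpos.le
        _ ≤ (Nat.factorial m:ℝ)*Real.exp L := mul_le_mul_of_nonneg_left hkexp (by positivity)
        _ ≤ (Nat.factorial m:ℝ)*(Real.exp 3*((m:ℝ)+1)*L^m) :=
            mul_le_mul_of_nonneg_left h5 (by positivity)
        _ = Real.exp 3*((Nat.factorial m:ℝ)*((m:ℝ)+1)*L^m) := by ring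
        _ ≤ 21*((Nat.factorial m:ℝ)*((m:ℝ)+1)*L^m) := by
            apply mul_le_mul_of_nonneg_right aux_exp_three_le (by positivity)
        _ = 21 * ((Nat.factorial (m+1):ℝ) * L^m) := by
            rw [Nat.factorial_succ]
            push_cast
            ring
        _ = 21 * X := by rw [hXdef]
        _ ≤ 44 * X := by nlinarith [hXpos]
    · have hm₀M' : (m₀:ℝ) = (M:ℝ) := by rw [hm₀M]
      have hE2m : E ≤ (2:ℝ)^m := by
        rw [hEdef, show (m:ℝ)/2 = (m:ℝ)*(1/2) by ring, Real.exp_nat_mul]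
        exact pow_le_pow_left₀ (Real.exp_pos _).le aux_exp_half_le_two m
      have hkle : (k:ℝ) ≤ 2*2^m := by
        have h6 : (k:ℝ) ≤ (M:ℝ) := by exact_mod_cast hkM.le
        calc (k:ℝ) ≤ (M:ℝ) := h6
          _ ≤ 2*E := hM2E
          _ ≤ 2*2^m := by linarith
      have final42 : (Nat.factorial m:ℝ)*(2*2^m) ≤ 44 * X := by
        rcases Nat.eq_zero_or_pos m with rfl | hm1
        · rw [hXdef]
          norm_num [Nat.factorial]
        · have h12 := aux_twelve_pow_le m hm1
          have key : (2:ℝ)*2^m ≤ 44*(m:ℝ)*((m:ℝ)/6)^m := by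
            rw [div_pow, mul_div_assoc', le_div_iff₀ (by positivity : (0:ℝ) < (6:ℝ)^m)]
            have e1 : (2:ℝ)*2^m*6^m = 2*12^m := by
              rw [mul_assoc, ← mul_pow]
              norm_num
            have e2 : (44:ℝ)*(m:ℝ)*(m:ℝ)^m = 2*(22*(m:ℝ)^(m+1)) := by
              rw [pow_succ]
              ring
            rw [e1, e2]
            linarith
          have hm6L : ((m:ℝ)/6)^m ≤ L^m := pow_le_pow_left₀ (by positivity) (by linarith) m
          calc (Nat.factorial m:ℝ)*(2*2^m)
              ≤ (Nat.factorial m:ℝ)*(44*(m:ℝ)*((m:ℝ)/6)^m) :=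
                mul_le_mul_of_nonneg_left key (by positivity)
            _ ≤ (Nat.factorial m:ℝ)*(44*(m:ℝ)*L^m) := by
                apply mul_le_mul_of_nonneg_left _ (by positivity)
                exact mul_le_mul_of_nonneg_left hm6L (by positivity)
            _ ≤ 44 * ((Nat.factorial (m+1):ℝ)*L^m) := by
                have hf : (Nat.factorial m:ℝ)*(m:ℝ) ≤ (Nat.factorial (m+1):ℝ) := by
                  rw [Nat.factorial_succ]
                  push_cast
                  have hfp : (0:ℝ) < (Nat.factorial m:ℝ) := by positivity
                  nlinarith [hfp]
                have hLm0 : (0:ℝ) ≤ L^m := by positivity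
                nlinarith [mul_le_mul_of_nonneg_right hf hLm0]
            _ = 44 * X := by rw [hXdef]
      calc (-auxF (m+1) ((m₀:ℕ):ℝ))*k ≤ (Nat.factorial m:ℝ)*k :=
            mul_le_mul_of_nonneg_right hIle hkpos.le
        _ ≤ (Nat.factorial m:ℝ)*(2*2^m) := mul_le_mul_of_nonneg_left hkle (by positivity)
        _ ≤ 44 * X := final42
end pieces

set_option maxHeartbeats 1600000

/-- There is an absolute constant `c > 0` such that for all positive
integers `k` and `s`, the series `∑_{p > k} (ln p)^s / p²` (over primes `p`) converges
and `∑_{p > k} (ln p)^s / p² ≤ c s! (ln(k+2))^(s-1) / k`. -/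
theorem romanoff_primes_tail_sum_le :
    ∃ c : ℝ, 0 < c ∧
      ∀ k s : ℕ, 0 < k → 0 < s →
        Summable (fun p : ℕ =>
          if p.Prime ∧ k < p then (Real.log p) ^ s / (p : ℝ) ^ 2 else 0) ∧
        ∑' p : ℕ, (if p.Prime ∧ k < p then (Real.log p) ^ s / (p : ℝ) ^ 2 else 0) ≤
          c * (Nat.factorial s : ℝ) * (Real.log (k + 2)) ^ (s - 1) / (k : ℝ) := by
  refine ⟨200, by norm_num, ?_⟩
  intro k s hk hs
  obtain ⟨m, rfl⟩ : ∃ m, s = m + 1 := ⟨s - 1, (Nat.succ_pred_eq_of_pos hs).symm⟩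
  simp only [Nat.add_sub_cancel]
  have hk1R : (1:ℝ) ≤ (k:ℝ) := by exact_mod_cast hk
  have hkpos : (0:ℝ) < (k:ℝ) := by linarith
  set L := Real.log ((k:ℝ) + 2) with hLdef
  have hek2 : (k:ℝ) + 2 = Real.exp L := (Real.exp_log (by positivity)).symm
  have hL1 : (1:ℝ) ≤ L := by
    rw [hLdef, Real.le_log_iff_exp_le (by positivity)]
    nlinarith [Real.exp_one_lt_d9]
  have hLm1 : (1:ℝ) ≤ L^m := by
    have := pow_le_pow_left₀ (zero_le_one) hL1 m
    simpa using this
  set E := Real.exp ((m:ℝ)/2) with hEdef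
  have hE1 : (1:ℝ) ≤ E := Real.one_le_exp (by positivity)
  set M := ⌈E⌉₊ with hMdef
  have hME : E ≤ (M:ℝ) := Nat.le_ceil E
  have hM1 : 1 ≤ M := Nat.one_le_ceil_iff.2 (by linarith)
  have hMle : (M:ℝ) ≤ E + 1 := (Nat.ceil_lt_add_one (by linarith)).le
  have hM2E : (M:ℝ) ≤ 2*E := by linarith
  have hlogM : (m:ℝ)/2 ≤ Real.log M := by
    calc (m:ℝ)/2 = Real.log E := (Real.log_exp _).symm
      _ ≤ Real.log M := Real.log_le_log (Real.exp_pos _) hME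
  have hEsq : E^2 = Real.exp (m:ℝ) := by
    rw [hEdef, ← Real.exp_nat_mul]
    congr 1
    push_cast
    ring
  set gmax := ((m:ℝ)/(2*Real.exp 1))^m with hgmaxdef
  have hgmax0 : 0 ≤ gmax := by positivity
  set G := fun n : ℕ => if n ≤ M then gmax else Real.log (n:ℝ)^m/(n:ℝ)^2 with hGdef
  set cc := fun n : ℕ => if n.Prime ∧ k < n then Real.log (n:ℝ) else 0 with hccdef
  set X := (Nat.factorial (m+1) : ℝ) * L^m with hXdef
  have hXpos : 0 < X := by
    rw [hXdef]
    have : (0:ℝ) < (Nat.factorial (m+1) : ℝ) := by positivity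
    nlinarith
  -- basic facts about G and cc
  have hG_nonneg : ∀ n, 0 ≤ G n := by
    intro n
    simp only [hGdef]
    split_ifs with h
    · exact hgmax0
    · have h2 : 1 ≤ n := by omega
      have : (0:ℝ) ≤ Real.log (n:ℝ) := Real.log_nonneg (by exact_mod_cast h2)
      positivity
  have hcc_nonneg : ∀ n, 0 ≤ cc n := by
    intro n
    simp only [hccdef]
    split_ifs with h
    · have h2 : 1 ≤ n := le_trans (by norm_num) h.1.two_le
      exact Real.log_nonneg (by exact_mod_cast h2)
    · exact le_refl 0
  have hMpos : (0:ℝ) < (M:ℝ) := by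
    have : (1:ℕ) ≤ M := hM1
    exact_mod_cast this
  have hG_anti : ∀ n, k + 1 ≤ n → G (n+1) ≤ G n := by
    intro n hn
    simp only [hGdef]
    by_cases h1 : n + 1 ≤ M
    · rw [if_pos (by omega : n ≤ M), if_pos h1]
    · rw [if_neg h1]
      by_cases h2 : n ≤ M
      · rw [if_pos h2]
        have hx : (1:ℝ) ≤ ((n+1:ℕ):ℝ) := by exact_mod_cast Nat.le_add_left 1 n
        exact aux_g_le_gmax hx m
      · rw [if_neg h2]
        have hn1 : (1:ℝ) ≤ (n:ℝ) := by exact_mod_cast (by omega : 1 ≤ n)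
        have hxy : (n:ℝ) ≤ ((n+1:ℕ):ℝ) := by push_cast; linarith
        apply aux_g_antitone m hn1 hxy
        have hMn : (M:ℝ) ≤ (n:ℝ) := by exact_mod_cast (by omega : M ≤ n)
        have hll := Real.log_le_log hMpos hMn
        linarith [hlogM]
  have hcck : ∀ n, n ≤ k → cc n = 0 := by
    intro n hn
    simp only [hccdef]
    rw [if_neg]
    rintro ⟨-, h⟩
    omega
  have hθ : ∀ N : ℕ, ∑ n ∈ range (N+1), cc n ≤ Real.log 4 * N := by
    intro N
    simp only [hccdef]
    exact aux_theta k N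
  have hf_le : ∀ n, (if n.Prime ∧ k < n then Real.log (n:ℝ)^(m+1)/(n:ℝ)^2 else 0)
      ≤ cc n * G n := by
    intro n
    simp only [hccdef, hGdef]
    by_cases hp : n.Prime ∧ k < n
    · rw [if_pos hp, if_pos hp]
      have h2 : 2 ≤ n := hp.1.two_le
      have hn1R : (1:ℝ) ≤ (n:ℝ) := by exact_mod_cast le_trans (by norm_num) h2
      have hlogn : 0 ≤ Real.log (n:ℝ) := Real.log_nonneg hn1R
      have hgG : Real.log (n:ℝ)^m/(n:ℝ)^2
          ≤ (if n ≤ M then gmax else Real.log (n:ℝ)^m/(n:ℝ)^2) := by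
        split_ifs with h
        · exact aux_g_le_gmax hn1R m
        · exact le_refl _
      calc Real.log (n:ℝ)^(m+1)/(n:ℝ)^2
          = Real.log (n:ℝ) * (Real.log (n:ℝ)^m/(n:ℝ)^2) := by rw [pow_succ]; ring
        _ ≤ Real.log (n:ℝ) * (if n ≤ M then gmax else Real.log (n:ℝ)^m/(n:ℝ)^2) :=
            mul_le_mul_of_nonneg_left hgG hlogn
    · rw [if_neg hp, if_neg hp, zero_mul]
  set m₀ := max k M with hm₀def
  have hm₀1 : 1 ≤ m₀ := le_trans hk (le_max_left k M)
  have hMm₀ : (M:ℝ) ≤ (m₀:ℝ) := by exact_mod_cast le_max_right k M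
  have hlogm₀ : (m:ℝ) ≤ 2 * Real.log (m₀:ℝ) := by
    have := Real.log_le_log hMpos hMm₀
    linarith [hlogM]
  have hsplit : ∀ J : ℕ, ∑ n ∈ Icc (k+1) J, G n
      ≤ ((M - k : ℕ):ℝ) * gmax + (-auxF (m+1) m₀) := by
    intro J
    have hdecomp : ∀ n, G n = (if n ≤ M then gmax else 0)
        + (if M < n then Real.log (n:ℝ)^m/(n:ℝ)^2 else 0) := by
      intro n
      simp only [hGdef]
      by_cases h : n ≤ M
      · rw [if_pos h, if_pos h, if_neg (by omega), add_zero]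
      · rw [if_neg h, if_neg h, if_pos (by omega), zero_add]
    rw [Finset.sum_congr rfl (fun n _ => hdecomp n), Finset.sum_add_distrib]
    have hb1 : ∑ n ∈ Icc (k+1) J, (if n ≤ M then gmax else 0)
        ≤ ((M - k:ℕ):ℝ) * gmax := by
      rw [← Finset.sum_filter]
      have hsub : (Icc (k+1) J).filter (fun n => n ≤ M) ⊆ Icc (k+1) M := by
        intro x hx
        simp only [Finset.mem_filter, Finset.mem_Icc] at hx ⊢
        omega
      have hcard : ((Icc (k+1) J).filter (fun n => n ≤ M)).card ≤ M - k := by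
        have := Finset.card_le_card hsub
        rwa [Nat.card_Icc, show M + 1 - (k+1) = M - k by omega] at this
      calc ∑ _n ∈ (Icc (k+1) J).filter (fun n => n ≤ M), gmax
          = ((Icc (k+1) J).filter (fun n => n ≤ M)).card • gmax := Finset.sum_const gmax
        _ = (((Icc (k+1) J).filter (fun n => n ≤ M)).card : ℝ) * gmax := by
            rw [nsmul_eq_mul]
        _ ≤ ((M - k:ℕ):ℝ) * gmax := by
            apply mul_le_mul_of_nonneg_right _ hgmax0
            exact_mod_cast hcard
    have hb2 : ∑ n ∈ Icc (k+1) J, (if M < n then Real.log (n:ℝ)^m/(n:ℝ)^2 else 0)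
        ≤ -auxF (m+1) m₀ := by
      rw [← Finset.sum_filter]
      have hfe : (Icc (k+1) J).filter (fun n => M < n) = Ioc m₀ J := by
        ext x
        simp only [Finset.mem_filter, Finset.mem_Ioc, Finset.mem_Icc, hm₀def]
        omega
      rw [hfe]
      have h := aux_sum_le_negF (m+1) (by omega) m₀ hm₀1 (by simpa using hlogm₀) J
      simpa using h
    exact add_le_add hb1 hb2
  have hm₀cases : (M ≤ k ∧ m₀ = k) ∨ (k < M ∧ m₀ = M) := by
    rcases le_or_gt M k with h | h
    · exact Or.inl ⟨h, by rw [hm₀def, max_eq_left h]⟩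
    · exact Or.inr ⟨h, by rw [hm₀def, max_eq_right h.le]⟩
  clear_value L E M gmax G cc X m₀
  have hfactle : ((Nat.factorial m : ℝ)) ≤ X := by
    rw [hXdef]
    have h1 : (Nat.factorial m : ℝ) ≤ (Nat.factorial (m+1) : ℝ) := by
      exact_mod_cast Nat.factorial_le (by omega)
    have h2 : (0:ℝ) < (Nat.factorial (m+1) : ℝ) := by positivity
    nlinarith [hLm1]
  have hA : (k:ℝ) * G (k+1) * (k:ℝ) ≤ 27 * X :=
    piece_A k m M L E gmax X G hk hL1 hek2 hE1 hMle hEsq hgmaxdef hGdef hXdef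
  have hB1 : ((M - k : ℕ):ℝ) * gmax * k ≤ 12 * X :=
    piece_B1 k m M L E gmax X hk hL1 hek2 hE1 hMle hEsq hEdef hgmaxdef hXdef
  have hlogk : Real.log (k:ℝ) ≤ L := by
    rw [hLdef]
    exact Real.log_le_log hkpos (by linarith)
  have hB2 : (-auxF (m+1) ((m₀:ℕ):ℝ)) * k ≤ 44 * X :=
    piece_B2 k m M m₀ L E X hk hL1 hek2 hE1 hMle hEdef hm₀1 hm₀cases hlogk hXdef
  have hm₀R1 : (1:ℝ) ≤ (m₀:ℝ) := by exact_mod_cast hm₀1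
  have hlog4nn : (0:ℝ) ≤ Real.log 4 := Real.log_nonneg (by norm_num)
  have hlog4 : Real.log 4 ≤ 2 := by
    rw [show (4:ℝ) = 2^(2:ℕ) by norm_num, Real.log_pow]
    push_cast
    nlinarith [Real.log_two_lt_d9]
  have hnonneg : ∀ n : ℕ, (0:ℝ) ≤ (if n.Prime ∧ k < n then Real.log (n:ℝ)^(m+1)/(n:ℝ)^2 else 0) := by
    intro n
    split_ifs with h
    · have h2 : 1 ≤ n := le_trans (by norm_num) h.1.two_le
      have hl : (0:ℝ) ≤ Real.log (n:ℝ) := Real.log_nonneg (by exact_mod_cast h2)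
      have hn : (0:ℝ) < (n:ℝ) := by exact_mod_cast lt_of_lt_of_le Nat.zero_lt_one h2
      positivity
    · exact le_refl 0
  have hbound : ∀ N : ℕ, ∑ n ∈ range N,
      (if n.Prime ∧ k < n then Real.log (n:ℝ)^(m+1)/(n:ℝ)^2 else 0) ≤ 200 * X / (k:ℝ) := by
    intro N
    have h1 : ∑ n ∈ range N, (if n.Prime ∧ k < n then Real.log (n:ℝ)^(m+1)/(n:ℝ)^2 else 0)
        ≤ ∑ n ∈ range N, cc n * G n := Finset.sum_le_sum (fun n _ => hf_le n)
    have h2 := aux_abel' k (Real.log 4) hlog4nn cc G hcc_nonneg hG_nonneg hG_anti hcck hθ N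
    have h3 := hsplit (N + k)
    have hnnF := aux_negF_nonneg (m+1) ((m₀:ℕ):ℝ) hm₀R1
    have hnn : (0:ℝ) ≤ (k:ℝ)*G (k+1) + (((M-k:ℕ):ℝ)*gmax + (-auxF (m+1) ((m₀:ℕ):ℝ))) := by
      have := hG_nonneg (k+1)
      have h4 : (0:ℝ) ≤ ((M-k:ℕ):ℝ)*gmax := mul_nonneg (Nat.cast_nonneg _) hgmax0
      nlinarith
    have htot : (k:ℝ)*G (k+1) + (((M-k:ℕ):ℝ)*gmax + (-auxF (m+1) ((m₀:ℕ):ℝ)))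
        ≤ 83 * X / (k:ℝ) := by
      rw [le_div_iff₀ hkpos]
      nlinarith [hA, hB1, hB2]
    calc ∑ n ∈ range N, (if n.Prime ∧ k < n then Real.log (n:ℝ)^(m+1)/(n:ℝ)^2 else 0)
        ≤ ∑ n ∈ range N, cc n * G n := h1
      _ ≤ Real.log 4 * ((k:ℝ) * G (k+1) + ∑ n ∈ Icc (k+1) (N + k), G n) := h2
      _ ≤ Real.log 4 * ((k:ℝ)*G (k+1) + (((M-k:ℕ):ℝ)*gmax + (-auxF (m+1) ((m₀:ℕ):ℝ)))) := by
          apply mul_le_mul_of_nonneg_left _ hlog4nn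
          linarith [h3]
      _ ≤ 2 * (83 * X / (k:ℝ)) := mul_le_mul hlog4 htot hnn (by norm_num)
      _ = 166 * (X / (k:ℝ)) := by ring
      _ ≤ 200 * (X / (k:ℝ)) := by nlinarith [div_nonneg hXpos.le hkpos.le]
      _ = 200 * X / (k:ℝ) := by ring
  constructor
  · exact summable_of_sum_range_le hnonneg hbound
  · calc ∑' (p : ℕ), (if p.Prime ∧ k < p then Real.log (p:ℝ)^(m+1)/(p:ℝ)^2 else 0)
        ≤ 200 * X / (k:ℝ) := Real.tsum_le_of_sum_range_le hnonneg hbound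
      _ = 200 * (Nat.factorial (m+1):ℝ) * L^m / (k:ℝ) := by rw [hXdef]; ring
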